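/- A finite cyclic group has no nonzero Brauer relations: if H_1,...,H_r are subgroups of a cyclic group G and n_1,...,n_r are integers with ⊕_i ℂ[G/H_i]^{⊕n_i} ≅ 0 as a virtual representation, then ∑_i n_i [G/H_i] = 0 in the Burnside ring of G. -/
import Mathlib

open scoped BigOperators

/-- The number of fixed points of `g` acting on the coset space `G ⧸ H`
(the value at `g` of the character of the permutation representation `ℂ[G/H]`). -/
noncomputable def permFix {G : Type*} [Group G] (H : Subgroup G) (g : G) : ℕ :=
  Nat.card {x : G ⧸ H // g • x = x}

lemma smul_quot_eq_iff {G : Type*} [CommGroup G] (H : Subgroup G) (g : G) (x : G ⧸ H) :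
    g • x = x ↔ g ∈ H := by
  induction x using QuotientGroup.induction_on with
  | H y =>
    rw [show g • (y : G ⧸ H) = ((g * y : G) : G ⧸ H) from rfl, QuotientGroup.eq]
    have h1 : (g * y)⁻¹ * y = g⁻¹ := by
      rw [mul_inv_rev, mul_comm y⁻¹ g⁻¹, mul_assoc, inv_mul_cancel, mul_one]
    rw [h1, inv_mem_iff]

lemma permFix_eq {G : Type*} [CommGroup G] (H : Subgroup G) (g : G) [Decidable (g ∈ H)] :
    permFix H g = if g ∈ H then Nat.card (G ⧸ H) else 0 := by
  unfold permFix
  split_ifs with h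
  · exact Nat.card_congr (Equiv.subtypeUnivEquiv fun x => (smul_quot_eq_iff H g x).mpr h)
  · haveI : IsEmpty {x : G ⧸ H // g • x = x} :=
      ⟨fun x => h ((smul_quot_eq_iff H g x.1).mp x.2)⟩
    exact Nat.card_of_isEmpty

/-- A finite cyclic group has no nonzero Brauer relations: if
`H_1, …, H_r` are subgroups of a cyclic group `G` and `n_1, …, n_r` integers with
`⊕_i ℂ[G/H_i]^{⊕ n_i} ≅ 0` as a virtual representation (equivalently, the virtual
permutation character vanishes), then `∑_i n_i [G/H_i] = 0` in the Burnside ring of `G`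
(i.e. for every subgroup `H` the total coefficient of `H` is zero; since `G` is abelian,
conjugacy of subgroups is just equality). -/
theorem stmt3 {G : Type*} [Group G] [Fintype G] [IsCyclic G]
    {ι : Type*} [Fintype ι] [DecidableEq (Subgroup G)]
    (n : ι → ℤ) (H : ι → Subgroup G)
    (hrel : ∀ g : G, (∑ i, (n i : ℂ) * (permFix (H i) g : ℂ)) = 0) :
    ∀ S : Subgroup G, (∑ i ∈ Finset.univ.filter (fun i => H i = S), n i) = 0 := by
  classical
  letI : CommGroup G := IsCyclic.commGroup
  haveI : Fintype (Subgroup G) := Fintype.ofFinite _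
  -- integer form of the relation
  have hint : ∀ g : G,
      (∑ i, n i * (if g ∈ H i then (Nat.card (G ⧸ H i) : ℤ) else 0)) = 0 := by
    intro g
    have h := hrel g
    simp only [permFix_eq] at h
    have : ((∑ i, n i * (if g ∈ H i then (Nat.card (G ⧸ H i) : ℤ) else 0) : ℤ) : ℂ) = 0 := by
      push_cast
      refine Eq.trans ?_ h
      refine Finset.sum_congr rfl fun i _ => ?_
      split_ifs <;> simp
    exact_mod_cast this
  -- relation indexed by subgroups
  have hrelS : ∀ S : Subgroup G,
      (∑ T ∈ Finset.univ.filter (fun T => S ≤ T),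
        (∑ i ∈ Finset.univ.filter (fun i => H i = T), n i) * (Nat.card (G ⧸ T) : ℤ)) = 0 := by
    intro S
    obtain ⟨g, hgen⟩ := IsCyclic.exists_generator (α := S)
    have hiff : ∀ T : Subgroup G, (g : G) ∈ T ↔ S ≤ T := by
      intro T
      constructor
      · intro h x hx
        obtain ⟨k, hk⟩ := hgen ⟨x, hx⟩
        have : ((g : S) ^ k : S) = (⟨x, hx⟩ : S) := hk
        have hx' : (g : G) ^ k = x := by
          simpa using congrArg (Subtype.val) this
        rw [← hx']
        exact zpow_mem h k
      · intro h
        exact h g.2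
    have h0 := hint (g : G)
    calc (∑ T ∈ Finset.univ.filter (fun T => S ≤ T),
          (∑ i ∈ Finset.univ.filter (fun i => H i = T), n i) * (Nat.card (G ⧸ T) : ℤ))
        = ∑ T ∈ Finset.univ.filter (fun T => S ≤ T),
            ∑ i ∈ Finset.univ.filter (fun i => H i = T), n i * (Nat.card (G ⧸ H i) : ℤ) := by
          refine Finset.sum_congr rfl fun T _ => ?_
          rw [Finset.sum_mul]
          refine Finset.sum_congr rfl fun i hi => ?_
          rw [(Finset.mem_filter.mp hi).2]
      _ = ∑ i ∈ Finset.univ.filter (fun i => H i ∈ Finset.univ.filter (fun T => S ≤ T)),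
            n i * (Nat.card (G ⧸ H i) : ℤ) :=
          Finset.sum_fiberwise_eq_sum_filter _ _ _ _
      _ = ∑ i, n i * (if (g : G) ∈ H i then (Nat.card (G ⧸ H i) : ℤ) else 0) := by
          rw [Finset.sum_filter]
          refine Finset.sum_congr rfl fun i _ => ?_
          simp only [Finset.mem_filter, Finset.mem_univ, true_and, mul_ite, mul_zero, hiff]
      _ = 0 := h0
  -- downward induction
  have wf : WellFounded ((· > ·) : Subgroup G → Subgroup G → Prop) := wellFounded_gt
  intro S
  induction S using WellFounded.induction wf with
  | _ S ih =>
    have h0 := hrelS S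
    have hsplit : Finset.univ.filter (fun T => S ≤ T)
        = insert S (Finset.univ.filter (fun T => S < T)) := by
      ext T
      simp [le_iff_lt_or_eq, or_comm, eq_comm]
    rw [hsplit, Finset.sum_insert (by simp)] at h0
    have hz : (∑ T ∈ Finset.univ.filter (fun T => S < T),
        (∑ i ∈ Finset.univ.filter (fun i => H i = T), n i) * (Nat.card (G ⧸ T) : ℤ)) = 0 := by
      refine Finset.sum_eq_zero fun T hT => ?_
      rw [ih T (Finset.mem_filter.mp hT).2, zero_mul]
    rw [hz, add_zero] at h0
    have hcard : (Nat.card (G ⧸ S) : ℤ) ≠ 0 := by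
      exact_mod_cast Nat.card_pos.ne'
    exact (mul_eq_zero.mp h0).resolve_right hcard
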